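/- Under p layers of global depolarizing noise with parameter q interleaved with parametrized unitary layers, the noisy loss satisfies L_noisy(θ) = (1−q)^p L(θ) + (1 − (1−q)^p) Tr(H)/2ⁿ, where L(θ) = Tr(H ρ(θ)) is the noiseless loss. Consequently, θ* is a stationary point (respectively strict saddle point) of L_noisy if and only if it is one of L, provided q < 1. -/
import Mathlib


open Matrix

noncomputable section

variable {n m : ℕ}

/-- The noiseless loss `L(θ) = Tr(H ρ(θ))` (real part of the trace). -/
def noiselessLoss (H : Matrix (Fin (2 ^ n)) (Fin (2 ^ n)) ℂ)
    (ρ : EuclideanSpace ℝ (Fin m) → Matrix (Fin (2 ^ n)) (Fin (2 ^ n)) ℂ)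
    (θ : EuclideanSpace ℝ (Fin m)) : ℝ :=
  ((H * ρ θ).trace).re

/-- The noisy output state under `p` layers of global depolarizing noise with parameter
`q`: `ρ_noisy(θ) = (1−q)^p ρ(θ) + (1 − (1−q)^p) I/2ⁿ`. -/
def noisyState (p : ℕ) (q : ℝ)
    (ρ : EuclideanSpace ℝ (Fin m) → Matrix (Fin (2 ^ n)) (Fin (2 ^ n)) ℂ)
    (θ : EuclideanSpace ℝ (Fin m)) : Matrix (Fin (2 ^ n)) (Fin (2 ^ n)) ℂ :=
  (((1 - q : ℝ) ^ p : ℝ) : ℂ) • ρ θ +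
    (((1 - (1 - q) ^ p : ℝ)) : ℂ) • (((2 : ℂ) ^ n)⁻¹ • (1 : Matrix _ _ ℂ))

/-- The noisy loss `L_noisy(θ) = Tr(H ρ_noisy(θ))`. -/
def noisyLoss (p : ℕ) (q : ℝ) (H : Matrix (Fin (2 ^ n)) (Fin (2 ^ n)) ℂ)
    (ρ : EuclideanSpace ℝ (Fin m) → Matrix (Fin (2 ^ n)) (Fin (2 ^ n)) ℂ)
    (θ : EuclideanSpace ℝ (Fin m)) : ℝ :=
  ((H * noisyState p q ρ θ).trace).re


private lemma fderiv_const_mul'' {E : Type*} [NormedAddCommGroup E] [NormedSpace ℝ E]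
    (c : ℝ) (hc : c ≠ 0) (f : E → ℝ) (x : E) :
    fderiv ℝ (fun y => c * f y) x = c • fderiv ℝ f x := by
  by_cases h : DifferentiableAt ℝ f x
  · exact fderiv_const_mul h c
  · have h2 : ¬ DifferentiableAt ℝ (fun y => c * f y) x := by
      intro h2
      apply h
      have h3 : DifferentiableAt ℝ (fun y => c⁻¹ * (c * f y)) x := h2.const_mul c⁻¹
      simpa [← mul_assoc, inv_mul_cancel₀ hc] using h3
    rw [fderiv_zero_of_not_differentiableAt h, fderiv_zero_of_not_differentiableAt h2, smul_zero]

private lemma fderiv_affine'' {E : Type*} [NormedAddCommGroup E] [NormedSpace ℝ E]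
    (c d : ℝ) (hc : c ≠ 0) (f : E → ℝ) (x : E) :
    fderiv ℝ (fun y => c * f y + d) x = c • fderiv ℝ f x := by
  rw [fderiv_add_const, fderiv_const_mul'' c hc f x]

private lemma gradient_affine'' (c d : ℝ) (hc : c ≠ 0) {E : Type*} [NormedAddCommGroup E]
    [InnerProductSpace ℝ E] [CompleteSpace E] (f : E → ℝ) (x : E) :
    gradient (fun y => c * f y + d) x = c • gradient f x := by
  unfold gradient
  rw [fderiv_affine'' c d hc f x, _root_.map_smul]

/-- Under `p` layers of global depolarizing noise with parameter `q`, the noisy loss is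
`L_noisy(θ) = (1−q)^p L(θ) + (1 − (1−q)^p) Tr(H)/2ⁿ`; consequently, for `0 ≤ q < 1`,
`θ*` is a stationary point (resp. strict saddle point, i.e. a stationary point where the
Hessian quadratic form takes a negative value) of `L_noisy` iff it is one of `L`. -/
theorem noisyLoss_affine_and_saddle_iff (p : ℕ) (q : ℝ) (hq0 : 0 ≤ q) (hq1 : q < 1)
    (H : Matrix (Fin (2 ^ n)) (Fin (2 ^ n)) ℂ) (hH : H.IsHermitian)
    (ρ : EuclideanSpace ℝ (Fin m) → Matrix (Fin (2 ^ n)) (Fin (2 ^ n)) ℂ)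
    (hρtrace : ∀ θ, (ρ θ).trace = 1) :
    (∀ θ, noisyLoss p q H ρ θ =
        (1 - q) ^ p * noiselessLoss H ρ θ + (1 - (1 - q) ^ p) * (H.trace.re / 2 ^ n)) ∧
    (∀ θs : EuclideanSpace ℝ (Fin m),
        gradient (noisyLoss p q H ρ) θs = 0 ↔ gradient (noiselessLoss H ρ) θs = 0) ∧
    (∀ θs : EuclideanSpace ℝ (Fin m),
        (gradient (noisyLoss p q H ρ) θs = 0 ∧
          ∃ v : EuclideanSpace ℝ (Fin m),
            fderiv ℝ (fun ϑ => fderiv ℝ (noisyLoss p q H ρ) ϑ v) θs v < 0) ↔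
        (gradient (noiselessLoss H ρ) θs = 0 ∧
          ∃ v : EuclideanSpace ℝ (Fin m),
            fderiv ℝ (fun ϑ => fderiv ℝ (noiselessLoss H ρ) ϑ v) θs v < 0)) := by
  have hc : (0:ℝ) < (1 - q) ^ p := pow_pos (by linarith) p
  have hcne : ((1 - q) ^ p : ℝ) ≠ 0 := ne_of_gt hc
  set c : ℝ := (1 - q) ^ p with hcdef
  set d : ℝ := (1 - c) * (H.trace.re / 2 ^ n) with hddef
  have key : ∀ θ, noisyLoss p q H ρ θ = c * noiselessLoss H ρ θ + d := by
    intro θ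
    unfold noisyLoss noisyState noiselessLoss
    rw [Matrix.mul_add, Matrix.mul_smul, Matrix.mul_smul, Matrix.mul_smul, Matrix.mul_one,
      Matrix.trace_add, Matrix.trace_smul, Matrix.trace_smul, Matrix.trace_smul]
    have h2 : ((2 : ℂ) ^ n)⁻¹ = ((((2 : ℝ) ^ n)⁻¹ : ℝ) : ℂ) := by push_cast; ring
    rw [h2, hddef, hcdef]
    simp only [Complex.add_re, Complex.re_ofReal_mul, smul_eq_mul, div_eq_mul_inv]
    ring
  have hfun : noisyLoss p q H ρ = fun θ => c * noiselessLoss H ρ θ + d := funext key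
  refine ⟨key, ?_, ?_⟩
  · intro θs
    rw [hfun, gradient_affine'' c d hcne, smul_eq_zero]
    simp [hcne]
  · intro θs
    have hgrad : gradient (noisyLoss p q H ρ) θs = 0 ↔
        gradient (noiselessLoss H ρ) θs = 0 := by
      rw [hfun, gradient_affine'' c d hcne, smul_eq_zero]
      simp [hcne]
    have hsnd : ∀ v : EuclideanSpace ℝ (Fin m),
        fderiv ℝ (fun ϑ => fderiv ℝ (noisyLoss p q H ρ) ϑ v) θs v =
          c * fderiv ℝ (fun ϑ => fderiv ℝ (noiselessLoss H ρ) ϑ v) θs v := by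
      intro v
      have h1 : (fun ϑ => fderiv ℝ (noisyLoss p q H ρ) ϑ v) =
          fun ϑ => c * fderiv ℝ (noiselessLoss H ρ) ϑ v := by
        funext ϑ
        rw [hfun, fderiv_affine'' c d hcne]
        rfl
      rw [h1, fderiv_const_mul'' c hcne]
      rfl
    constructor
    · rintro ⟨hg, v, hv⟩
      refine ⟨hgrad.mp hg, v, ?_⟩
      rw [hsnd v] at hv
      nlinarith
    · rintro ⟨hg, v, hv⟩
      refine ⟨hgrad.mpr hg, v, ?_⟩
      rw [hsnd v]
      nlinarith


end
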